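/- Let Ā ∈ ℝ^{5×5} be the block matrix with Ā₁₂ = 1, second row Ā₂,₃:₅ = gᵀ, all other entries zero, and let A(t) = Ā ⊗ I₃ − I₅ ⊗ [ω(t)]_× for a continuous ω : ℝ → ℝ³. Let R : ℝ → SO(3) satisfy Ṙ = R[ω]_×, and T(t) = I₅ ⊗ R(t). Then φ(t,s) := T(t)ᵀ (exp(Ā(t−s)) ⊗ I₃) T(s) is the state transition matrix of ẋ = A(t)x, i.e., ∂φ(t,s)/∂t = A(t)φ(t,s) and φ(t,t) = I₁₅. -/

import Mathlib

open Matrix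
open scoped Kronecker

/-- The skew-symmetric (cross-product) matrix of `x ∈ ℝ³`. -/
def skew (x : Fin 3 → ℝ) : Matrix (Fin 3) (Fin 3) ℝ :=
  !![0, -x 2, x 1; x 2, 0, -x 0; -x 1, x 0, 0]

/-- The matrix `Ā = [[0, 1, 0₁ₓ₃], [0, 0, gᵀ], [0₃ₓ₁, 0₃ₓ₁, 0₃ₓ₃]]`. -/
def Abar (g : Fin 3 → ℝ) : Matrix (Fin 5) (Fin 5) ℝ :=
  Matrix.of fun i j =>
    if i.val = 0 ∧ j.val = 1 then 1
    else if h : i.val = 1 ∧ 2 ≤ j.val then g ⟨j.val - 2, by omega⟩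
    else 0

lemma skew_transpose (x : Fin 3 → ℝ) : (skew x)ᵀ = -skew x := by
  ext i j
  fin_cases i <;> fin_cases j <;> simp [skew]

lemma kronecker_neg {l m n p : Type*} (A : Matrix l m ℝ) (B : Matrix n p ℝ) :
    A ⊗ₖ (-B) = -(A ⊗ₖ B) := by
  ext i j
  simp [Matrix.kroneckerMap_apply]

lemma exp_entry_hasDerivAt (g : Fin 3 → ℝ) (s t : ℝ) (i j : Fin 5) :
    HasDerivAt (fun τ : ℝ => (NormedSpace.exp ((τ - s) • Abar g)) i j)
      ((Abar g * NormedSpace.exp ((t - s) • Abar g)) i j) t := by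
  letI : NormedRing (Matrix (Fin 5) (Fin 5) ℝ) := Matrix.linftyOpNormedRing
  letI : NormedAlgebra ℝ (Matrix (Fin 5) (Fin 5) ℝ) := Matrix.linftyOpNormedAlgebra
  have h1 : HasDerivAt (fun u : ℝ => NormedSpace.exp (u • Abar g))
      (Abar g * NormedSpace.exp ((t - s) • Abar g)) (t - s) :=
    hasDerivAt_exp_smul_const' (𝕂 := ℝ) (Abar g) (t - s)
  have h2 : HasDerivAt (fun τ : ℝ => τ - s) 1 t := (hasDerivAt_id t).sub_const s
  have h3 := h1.scomp t h2
  rw [one_smul] at h3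
  let L : Matrix (Fin 5) (Fin 5) ℝ →ₗ[ℝ] ℝ :=
    { toFun := fun M => M i j, map_add' := fun _ _ => rfl, map_smul' := fun _ _ => rfl }
  have := (LinearMap.toContinuousLinearMap L).hasFDerivAt.comp_hasDerivAt t h3
  exact this

theorem transition_matrix_INS (g : Fin 3 → ℝ) (ω : ℝ → Fin 3 → ℝ) (hω : Continuous ω)
    (R : ℝ → Matrix (Fin 3) (Fin 3) ℝ)
    (hSO : ∀ t, R t * (R t)ᵀ = 1 ∧ (R t)ᵀ * R t = 1 ∧ (R t).det = 1)
    (hR : ∀ t i j, HasDerivAt (fun s => R s i j) ((R t * skew (ω t)) i j) t)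
    (A : ℝ → Matrix (Fin 5 × Fin 3) (Fin 5 × Fin 3) ℝ)
    (hA : ∀ t, A t = Abar g ⊗ₖ (1 : Matrix (Fin 3) (Fin 3) ℝ)
        - (1 : Matrix (Fin 5) (Fin 5) ℝ) ⊗ₖ skew (ω t))
    (T : ℝ → Matrix (Fin 5 × Fin 3) (Fin 5 × Fin 3) ℝ)
    (hT : ∀ t, T t = (1 : Matrix (Fin 5) (Fin 5) ℝ) ⊗ₖ R t)
    (φ : ℝ → ℝ → Matrix (Fin 5 × Fin 3) (Fin 5 × Fin 3) ℝ)
    (hφ : ∀ t s, φ t s =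
      (T t)ᵀ * ((NormedSpace.exp ((t - s) • Abar g)) ⊗ₖ (1 : Matrix (Fin 3) (Fin 3) ℝ)) * T s) :
    (∀ s t i j, HasDerivAt (fun τ => φ τ s i j) ((A t * φ t s) i j) t) ∧
      (∀ t, φ t t = 1) := by
  constructor
  · intro s t i j
    set E : ℝ → Matrix (Fin 5) (Fin 5) ℝ := fun τ => NormedSpace.exp ((τ - s) • Abar g)
      with hE
    set S : Matrix (Fin 3) (Fin 3) ℝ := skew (ω t) with hS
    -- derivative of entries of T
    have hTd : ∀ p q : Fin 5 × Fin 3, HasDerivAt (fun τ => T τ p q)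
        ((T t * ((1 : Matrix (Fin 5) (Fin 5) ℝ) ⊗ₖ S)) p q) t := by
      intro p q
      have h1 : (fun τ => T τ p q)
          = fun τ => (1 : Matrix (Fin 5) (Fin 5) ℝ) p.1 q.1 * R τ p.2 q.2 := by
        funext τ; rw [hT τ]; rfl
      have h2 : T t * ((1 : Matrix (Fin 5) (Fin 5) ℝ) ⊗ₖ S)
          = (1 : Matrix (Fin 5) (Fin 5) ℝ) ⊗ₖ (R t * S) := by
        rw [hT t, ← Matrix.mul_kronecker_mul, one_mul]
      rw [h1, h2]
      exact ((hR t p.2 q.2).const_mul _)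
    -- derivative of entries of E τ ⊗ₖ 1
    have hMd : ∀ p q : Fin 5 × Fin 3,
        HasDerivAt (fun τ => (E τ ⊗ₖ (1 : Matrix (Fin 3) (Fin 3) ℝ)) p q)
          (((Abar g * E t) ⊗ₖ (1 : Matrix (Fin 3) (Fin 3) ℝ)) p q) t := by
      intro p q
      have h1 : (fun τ => (E τ ⊗ₖ (1 : Matrix (Fin 3) (Fin 3) ℝ)) p q)
          = fun τ => E τ p.1 q.1 * (1 : Matrix (Fin 3) (Fin 3) ℝ) p.2 q.2 := rfl
      rw [h1]
      exact (exp_entry_hasDerivAt g s t p.1 q.1).mul_const _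
    -- the function as explicit double sum
    have key : ∀ τ, φ τ s i j
        = ∑ q, (∑ p, T τ p i * (E τ ⊗ₖ (1 : Matrix (Fin 3) (Fin 3) ℝ)) p q) * T s q j := by
      intro τ
      rw [hφ]
      simp [Matrix.mul_apply, Matrix.transpose_apply, Finset.sum_mul]
      rfl
    have hsum : HasDerivAt
        (fun τ => ∑ q, (∑ p, T τ p i * (E τ ⊗ₖ (1 : Matrix (Fin 3) (Fin 3) ℝ)) p q) * T s q j)
        (∑ q, (∑ p, ((T t * ((1 : Matrix (Fin 5) (Fin 5) ℝ) ⊗ₖ S)) p i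
              * (E t ⊗ₖ (1 : Matrix (Fin 3) (Fin 3) ℝ)) p q
            + T t p i * ((Abar g * E t) ⊗ₖ (1 : Matrix (Fin 3) (Fin 3) ℝ)) p q))
          * T s q j) t :=
      HasDerivAt.fun_sum fun q _ =>
        (HasDerivAt.fun_sum fun p _ => (hTd p i).mul (hMd p q)).mul_const _
    -- identify the derivative with (A t * φ t s) i j
    have hder : (A t * φ t s) i j
        = ∑ q, (∑ p, ((T t * ((1 : Matrix (Fin 5) (Fin 5) ℝ) ⊗ₖ S)) p i
              * (E t ⊗ₖ (1 : Matrix (Fin 3) (Fin 3) ℝ)) p q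
            + T t p i * ((Abar g * E t) ⊗ₖ (1 : Matrix (Fin 3) (Fin 3) ℝ)) p q))
          * T s q j := by
      have matid : A t * φ t s
          = (T t * ((1 : Matrix (Fin 5) (Fin 5) ℝ) ⊗ₖ S))ᵀ
              * (E t ⊗ₖ (1 : Matrix (Fin 3) (Fin 3) ℝ)) * T s
            + (T t)ᵀ * ((Abar g * E t) ⊗ₖ (1 : Matrix (Fin 3) (Fin 3) ℝ)) * T s := by
        rw [hA, hφ, hT, hT]
        rw [← Matrix.kroneckerMap_transpose, Matrix.transpose_one]
        rw [Matrix.transpose_mul, ← Matrix.kroneckerMap_transpose, Matrix.transpose_one,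
          ← Matrix.kroneckerMap_transpose, Matrix.transpose_one, skew_transpose]
        simp only [← hS, ← hE]
        rw [kronecker_neg, sub_mul]
        simp only [Matrix.neg_mul, ← Matrix.mul_kronecker_mul, Matrix.one_mul,
          Matrix.mul_one, mul_assoc]
        exact sub_eq_neg_add _ _
      rw [matid]
      simp only [Matrix.add_apply, Matrix.mul_apply, Matrix.transpose_apply, Finset.sum_mul,
        Finset.sum_add_distrib, add_mul]
    rw [hder]
    have : (fun τ => φ τ s i j)
        = fun τ => ∑ q, (∑ p, T τ p i * (E τ ⊗ₖ (1 : Matrix (Fin 3) (Fin 3) ℝ)) p q) * T s q j :=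
      funext key
    rw [this]
    exact hsum
  · intro t
    rw [hφ, hT]
    rw [sub_self, zero_smul, NormedSpace.exp_zero]
    rw [← Matrix.kroneckerMap_transpose, Matrix.transpose_one]
    rw [← Matrix.mul_kronecker_mul, ← Matrix.mul_kronecker_mul]
    simp only [Matrix.one_mul, Matrix.mul_one]
    rw [(hSO t).2.1, Matrix.one_kronecker_one]
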